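/- Assume R₀ := BᵀB + σ²·B̄ᵀB̄ is positive definite. Let (τ_k)_{k≥1} ⊂ (0,1) with τ_k → 0, and for each k let P^(τ_k) be a symmetric positive definite matrix with Tr P^(τ_k) = 1 satisfying Φ̂_{τ_k}(P^(τ_k)) = P^(τ_k); set γ^(τ_k) := Tr((1−τ_k)·Φ(P^(τ_k)) + (τ_k/n)·I). Suppose P^(τ_k) → P* for some symmetric positive definite matrix P*. Then γ^(τ_k)/(1−τ_k) − L(P^(τ_k)) → 0 as k → ∞. -/

import Mathlib

open Matrix MeasureTheory ProbabilityTheory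
open scoped ENNReal Classical

noncomputable section

namespace SCS

/-! ### Matrix-analytic definitions -/

/-- Rayleigh-quotient definition of the largest eigenvalue of a symmetric matrix. -/
def lamMax {n : ℕ} (M : Matrix (Fin n) (Fin n) ℝ) : ℝ :=
  ⨆ x : {x : Fin n → ℝ // x ⬝ᵥ x = 1}, x.1 ⬝ᵥ M.mulVec x.1

/-- Rayleigh-quotient definition of the smallest eigenvalue of a symmetric matrix. -/
def lamMin {n : ℕ} (M : Matrix (Fin n) (Fin n) ℝ) : ℝ :=
  ⨅ x : {x : Fin n → ℝ // x ⬝ᵥ x = 1}, x.1 ⬝ᵥ M.mulVec x.1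

/-- Spectral norm (the operator norm induced by the Euclidean norm). -/
def specNorm {p q : ℕ} (M : Matrix (Fin p) (Fin q) ℝ) : ℝ :=
  Real.sqrt (lamMax (Mᵀ * M))

variable {n m : ℕ}

/-- `R(P) = BᵀPB + σ²·B̄ᵀPB̄`. -/
def Rop (σ : ℝ) (B Bbar : Matrix (Fin n) (Fin m) ℝ) (P : Matrix (Fin n) (Fin n) ℝ) :
    Matrix (Fin m) (Fin m) ℝ :=
  Bᵀ * P * B + σ ^ 2 • (Bbarᵀ * P * Bbar)

/-- `S(P) = AᵀPB + σ²·ĀᵀPB̄`. -/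
def Sop (σ : ℝ) (A Abar : Matrix (Fin n) (Fin n) ℝ) (B Bbar : Matrix (Fin n) (Fin m) ℝ)
    (P : Matrix (Fin n) (Fin n) ℝ) : Matrix (Fin n) (Fin m) ℝ :=
  Aᵀ * P * B + σ ^ 2 • (Abarᵀ * P * Bbar)

/-- `Φ(P) = AᵀPA + σ²·ĀᵀPĀ − S(P)·R(P)⁻¹·S(P)ᵀ`. -/
def Phi (σ : ℝ) (A Abar : Matrix (Fin n) (Fin n) ℝ) (B Bbar : Matrix (Fin n) (Fin m) ℝ)
    (P : Matrix (Fin n) (Fin n) ℝ) : Matrix (Fin n) (Fin n) ℝ :=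
  Aᵀ * P * A + σ ^ 2 • (Abarᵀ * P * Abar)
    - Sop σ A Abar B Bbar P * (Rop σ B Bbar P)⁻¹ * (Sop σ A Abar B Bbar P)ᵀ

/-- `K(P) = R(P)⁻¹·S(P)ᵀ`. -/
def Kgain (σ : ℝ) (A Abar : Matrix (Fin n) (Fin n) ℝ) (B Bbar : Matrix (Fin n) (Fin m) ℝ)
    (P : Matrix (Fin n) (Fin n) ℝ) : Matrix (Fin m) (Fin n) ℝ :=
  (Rop σ B Bbar P)⁻¹ * (Sop σ A Abar B Bbar P)ᵀ

/-- `C_A = λ_max(AAᵀ + σ²·ĀĀᵀ)`. -/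
def CA (σ : ℝ) (A Abar : Matrix (Fin n) (Fin n) ℝ) : ℝ :=
  lamMax (A * Aᵀ + σ ^ 2 • (Abar * Abarᵀ))

/-- `δ_τ = (τ/n)/((1−τ)·C_A + τ)`. -/
def deltaTau (σ : ℝ) (A Abar : Matrix (Fin n) (Fin n) ℝ) (τ : ℝ) : ℝ :=
  (τ / (n : ℝ)) / ((1 - τ) * CA σ A Abar + τ)

/-- The regularized normalized operator
`Φ̂_τ(P) = ((1−τ)·Φ(P) + (τ/n)·I) / Tr((1−τ)·Φ(P) + (τ/n)·I)`. -/
def PhiHat (σ : ℝ) (A Abar : Matrix (Fin n) (Fin n) ℝ) (B Bbar : Matrix (Fin n) (Fin m) ℝ)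
    (τ : ℝ) (P : Matrix (Fin n) (Fin n) ℝ) : Matrix (Fin n) (Fin n) ℝ :=
  (Matrix.trace ((1 - τ) • Phi σ A Abar B Bbar P
      + (τ / (n : ℝ)) • (1 : Matrix (Fin n) (Fin n) ℝ)))⁻¹ •
    ((1 - τ) • Phi σ A Abar B Bbar P + (τ / (n : ℝ)) • (1 : Matrix (Fin n) (Fin n) ℝ))

/-- Inverse of the positive-semidefinite square root (junk value `0` off the PSD cone),
so `invSqrt P = P^{−1/2}` for positive definite `P`. -/
def invSqrt {n : ℕ} (P : Matrix (Fin n) (Fin n) ℝ) : Matrix (Fin n) (Fin n) ℝ :=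
  if h : P.PosSemidef then
    (h.1.eigenvectorUnitary.1 * diagonal (((↑) : ℝ → ℝ) ∘ Real.sqrt ∘ h.1.eigenvalues) *
      (star h.1.eigenvectorUnitary : Matrix (Fin n) (Fin n) ℝ))⁻¹ else 0

/-- `L(P) = λ_min(P^{−1/2}·Φ(P)·P^{−1/2})`. -/
def Lval (σ : ℝ) (A Abar : Matrix (Fin n) (Fin n) ℝ) (B Bbar : Matrix (Fin n) (Fin m) ℝ)
    (P : Matrix (Fin n) (Fin n) ℝ) : ℝ :=
  lamMin (invSqrt P * Phi σ A Abar B Bbar P * invSqrt P)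

/-- `U(P) = λ_max(P^{−1/2}·Φ(P)·P^{−1/2})`. -/
def Uval (σ : ℝ) (A Abar : Matrix (Fin n) (Fin n) ℝ) (B Bbar : Matrix (Fin n) (Fin m) ℝ)
    (P : Matrix (Fin n) (Fin n) ℝ) : ℝ :=
  lamMax (invSqrt P * Phi σ A Abar B Bbar P * invSqrt P)

/-- The trace-normalized slice `S_a = {X symmetric : X ⪰ a·I, Tr X = 1}`. -/
def Slice (a : ℝ) : Set (Matrix (Fin n) (Fin n) ℝ) :=
  {X | X.IsSymm ∧ (X - a • (1 : Matrix (Fin n) (Fin n) ℝ)).PosSemidef ∧ X.trace = 1}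

/-- `α_A = ‖A‖² + σ²·‖Ā‖²` (spectral norms). -/
def alphaA (σ : ℝ) (A Abar : Matrix (Fin n) (Fin n) ℝ) : ℝ :=
  specNorm A ^ 2 + σ ^ 2 * specNorm Abar ^ 2

/-- `α_S = ‖A‖·‖B‖ + σ²·‖Ā‖·‖B̄‖`. -/
def alphaS (σ : ℝ) (A Abar : Matrix (Fin n) (Fin n) ℝ) (B Bbar : Matrix (Fin n) (Fin m) ℝ) : ℝ :=
  specNorm A * specNorm B + σ ^ 2 * specNorm Abar * specNorm Bbar

/-- `α_R = ‖B‖² + σ²·‖B̄‖²`. -/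
def alphaR (σ : ℝ) (B Bbar : Matrix (Fin n) (Fin m) ℝ) : ℝ :=
  specNorm B ^ 2 + σ ^ 2 * specNorm Bbar ^ 2

/-- `c_R(a) = 1/(a·λ_min(R₀))`. -/
def cR (σ : ℝ) (B Bbar : Matrix (Fin n) (Fin m) ℝ) (a : ℝ) : ℝ :=
  1 / (a * lamMin (Bᵀ * B + σ ^ 2 • (Bbarᵀ * Bbar)))

/-- `L_Φ(a) = α_A + 2·α_S²·c_R(a) + α_S²·α_R·c_R(a)²`. -/
def LPhi (σ : ℝ) (A Abar : Matrix (Fin n) (Fin n) ℝ) (B Bbar : Matrix (Fin n) (Fin m) ℝ)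
    (a : ℝ) : ℝ :=
  alphaA σ A Abar + 2 * alphaS σ A Abar B Bbar ^ 2 * cR σ B Bbar a
    + alphaS σ A Abar B Bbar ^ 2 * alphaR σ B Bbar * cR σ B Bbar a ^ 2

/-- `C_Φ(a) = α_A + α_S²·c_R(a)`. -/
def CPhi (σ : ℝ) (A Abar : Matrix (Fin n) (Fin n) ℝ) (B Bbar : Matrix (Fin n) (Fin m) ℝ)
    (a : ℝ) : ℝ :=
  alphaA σ A Abar + alphaS σ A Abar B Bbar ^ 2 * cR σ B Bbar a

/-- The contraction modulus `Λ(τ)`. -/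
def LambdaTau (σ : ℝ) (A Abar : Matrix (Fin n) (Fin n) ℝ) (B Bbar : Matrix (Fin n) (Fin m) ℝ)
    (τ : ℝ) : ℝ :=
  (1 - τ) * LPhi σ A Abar B Bbar (deltaTau σ A Abar τ) / τ
    + (1 - τ) * ((1 - τ) * CPhi σ A Abar B Bbar (deltaTau σ A Abar τ) + τ / (n : ℝ))
        * (n : ℝ) * LPhi σ A Abar B Bbar (deltaTau σ A Abar τ) / τ ^ 2

/-- The directional derivative `DΦ(P)[H]`. -/
def DPhi (σ : ℝ) (A Abar : Matrix (Fin n) (Fin n) ℝ) (B Bbar : Matrix (Fin n) (Fin m) ℝ)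
    (P H : Matrix (Fin n) (Fin n) ℝ) : Matrix (Fin n) (Fin n) ℝ :=
  Aᵀ * H * A + σ ^ 2 • (Abarᵀ * H * Abar)
    - (Aᵀ * H * B + σ ^ 2 • (Abarᵀ * H * Bbar)) * (Rop σ B Bbar P)⁻¹ * (Sop σ A Abar B Bbar P)ᵀ
    - Sop σ A Abar B Bbar P * (Rop σ B Bbar P)⁻¹ * (Bᵀ * H * A + σ ^ 2 • (Bbarᵀ * H * Abar))
    + Sop σ A Abar B Bbar P * (Rop σ B Bbar P)⁻¹ * (Bᵀ * H * B + σ ^ 2 • (Bbarᵀ * H * Bbar))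
        * (Rop σ B Bbar P)⁻¹ * (Sop σ A Abar B Bbar P)ᵀ

/-- `s_τ(P) = Tr((1−τ)·Φ(P) + (τ/n)·I)`. -/
def sTau (σ : ℝ) (A Abar : Matrix (Fin n) (Fin n) ℝ) (B Bbar : Matrix (Fin n) (Fin m) ℝ)
    (τ : ℝ) (P : Matrix (Fin n) (Fin n) ℝ) : ℝ :=
  Matrix.trace ((1 - τ) • Phi σ A Abar B Bbar P + (τ / (n : ℝ)) • (1 : Matrix (Fin n) (Fin n) ℝ))

/-- The directional derivative
`DΦ̂_τ(P)[H] = ((1−τ)/s_τ(P))·(DΦ(P)[H] − Φ̂_τ(P)·Tr(DΦ(P)[H]))`. -/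
def DPhiHat (σ : ℝ) (A Abar : Matrix (Fin n) (Fin n) ℝ) (B Bbar : Matrix (Fin n) (Fin m) ℝ)
    (τ : ℝ) (P H : Matrix (Fin n) (Fin n) ℝ) : Matrix (Fin n) (Fin n) ℝ :=
  ((1 - τ) / sTau σ A Abar B Bbar τ P) •
    (DPhi σ A Abar B Bbar P H
      - Matrix.trace (DPhi σ A Abar B Bbar P H) • PhiHat σ A Abar B Bbar τ P)

/-- The local Lipschitz modulus `Lip(P,τ) = sup{‖DΦ̂_τ(P)[H]‖ : H symmetric, ‖H‖ = 1}`. -/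
def LipMod (σ : ℝ) (A Abar : Matrix (Fin n) (Fin n) ℝ) (B Bbar : Matrix (Fin n) (Fin m) ℝ)
    (τ : ℝ) (P : Matrix (Fin n) (Fin n) ℝ) : ℝ :=
  ⨆ H : {H : Matrix (Fin n) (Fin n) ℝ // H.IsSymm ∧ specNorm H = 1},
    specNorm (DPhiHat σ A Abar B Bbar τ P H.1)

/-! ### Probabilistic definitions -/

/-- The Gaussian measure on `ℝ` with mean `0` and variance `σ²`. -/
def gauss (σ : ℝ) : Measure ℝ := gaussianReal 0 ⟨σ ^ 2, sq_nonneg σ⟩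

/-- The Gaussian expectation `E_ω[((A+Āω)x + (B+B̄ω)v)ᵀ·P·((A+Āω)x + (B+B̄ω)v)]`. -/
def qform (σ : ℝ) (A Abar : Matrix (Fin n) (Fin n) ℝ) (B Bbar : Matrix (Fin n) (Fin m) ℝ)
    (P : Matrix (Fin n) (Fin n) ℝ) (x : Fin n → ℝ) (v : Fin m → ℝ) : ℝ :=
  ∫ s, (((A + s • Abar).mulVec x + (B + s • Bbar).mulVec v) ⬝ᵥ
      P.mulVec ((A + s • Abar).mulVec x + (B + s • Bbar).mulVec v)) ∂(gauss σ)

/-- The data of the stochastic control system: a probability space `(Ω, F, Pr)`,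
system matrices `A, Ā, B, B̄`, a noise level `σ > 0`, an i.i.d. sequence `w` of
Gaussian random variables with mean `0` and variance `σ²`, and a sub-σ-algebra `G`
independent of the noise. -/
structure Ctx (n m : ℕ) (Ω : Type) [mΩ : MeasurableSpace Ω] where
  Pr : Measure Ω
  isProb : IsProbabilityMeasure Pr
  σ : ℝ
  hσ : 0 < σ
  A : Matrix (Fin n) (Fin n) ℝ
  Abar : Matrix (Fin n) (Fin n) ℝ
  B : Matrix (Fin n) (Fin m) ℝ
  Bbar : Matrix (Fin n) (Fin m) ℝ
  w : ℕ → Ω → ℝ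
  hw_meas : ∀ k, Measurable (w k)
  hw_gauss : ∀ k, Pr.map (w k) = gauss σ
  hw_iid : iIndepFun w Pr
  G : MeasurableSpace Ω
  hG : G ≤ mΩ
  hw_indep_G : Indep (⨆ k, MeasurableSpace.comap (w k) inferInstance) G Pr

variable {Ω : Type} [MeasurableSpace Ω]

/-- The filtration `F_k = G ∨ σ(ω₀, …, ω_{k−1})`. -/
def Ctx.Fk (C : Ctx n m Ω) (k : ℕ) : MeasurableSpace Ω :=
  C.G ⊔ ⨆ i ∈ Finset.range k, MeasurableSpace.comap (C.w i) inferInstance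

/-- Admissible policies: `u_k` is `F_k`-measurable and square-integrable. -/
def Ctx.Admissible (C : Ctx n m Ω) (u : ℕ → Ω → Fin m → ℝ) : Prop :=
  ∀ k, Measurable[C.Fk k] (u k) ∧ MemLp (u k) 2 C.Pr

/-- Admissible initial states: `G`-measurable and square-integrable. -/
def Ctx.InitOK (C : Ctx n m Ω) (x : Ω → Fin n → ℝ) : Prop :=
  Measurable[C.G] x ∧ MemLp x 2 C.Pr

/-- The state trajectory `x_{k+1} = (A + Ā·ω_k)x_k + (B + B̄·ω_k)u_k`. -/
def Ctx.traj (C : Ctx n m Ω) (x0 : Ω → Fin n → ℝ) (u : ℕ → Ω → Fin m → ℝ) :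
    ℕ → Ω → Fin n → ℝ
  | 0 => x0
  | k + 1 => fun s =>
      (C.A + C.w k s • C.Abar).mulVec (C.traj x0 u k s)
      + (C.B + C.w k s • C.Bbar).mulVec (u k s)

/-- `E[xᵀx]`. -/
def msSq {n : ℕ} (Pr : Measure Ω) (x : Ω → Fin n → ℝ) : ℝ := ∫ s, x s ⬝ᵥ x s ∂Pr

/-- The mean-square norm `‖x‖_ms = (E[xᵀx])^{1/2}`. -/
def msNorm {n : ℕ} (Pr : Measure Ω) (x : Ω → Fin n → ℝ) : ℝ := Real.sqrt (msSq Pr x)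

/-- The mean-square stabilizing rate `ρ(u)` of a policy. -/
def Ctx.rate (C : Ctx n m Ω) (u : ℕ → Ω → Fin m → ℝ) : ℝ :=
  sInf {ρ : ℝ | 0 ≤ ρ ∧ ∃ κ : ℝ, 0 ≤ κ ∧ ∀ x0, C.InitOK x0 → ∀ k : ℕ,
    msSq C.Pr (C.traj x0 u k) ≤ κ * ρ ^ (2 * k) * msSq C.Pr x0}

/-- The optimal stabilizing rate `ρ* = inf_{u ∈ U} ρ(u)`. -/
def Ctx.rhoStar (C : Ctx n m Ω) : ℝ :=
  sInf {r : ℝ | ∃ u, C.Admissible u ∧ r = C.rate u}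

/-- `η(x) = inf_{u ∈ U} sup_{k ∈ ℕ} ‖x_k‖_ms/(ρ*)^k` (with values in `[0,∞]`). -/
def Ctx.eta (C : Ctx n m Ω) (x : Ω → Fin n → ℝ) : ℝ≥0∞ :=
  ⨅ (u : ℕ → Ω → Fin m → ℝ) (_ : C.Admissible u),
    ⨆ k : ℕ, ENNReal.ofReal (msNorm C.Pr (C.traj x u k) / C.rhoStar ^ k)

/-- The per-trajectory mean-square stabilizing rate `ρ(u; x₀)`. -/
def Ctx.rateAt (C : Ctx n m Ω) (x0 : Ω → Fin n → ℝ) (u : ℕ → Ω → Fin m → ℝ) : ℝ :=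
  sInf {ρ : ℝ | 0 ≤ ρ ∧ ∃ κ : ℝ, 0 ≤ κ ∧ ∀ k : ℕ,
    msSq C.Pr (C.traj x0 u k) ≤ κ * ρ ^ (2 * k) * msSq C.Pr x0}

/-- The cost `J(x₀,u) = limsup_k (1/k)·log(E[x_kᵀx_k]/E[x₀ᵀx₀])`. -/
def Ctx.J (C : Ctx n m Ω) (x0 : Ω → Fin n → ℝ) (u : ℕ → Ω → Fin m → ℝ) : ℝ :=
  Filter.limsup
    (fun k : ℕ => (1 / (k : ℝ)) * Real.log (msSq C.Pr (C.traj x0 u k) / msSq C.Pr x0))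
    Filter.atTop

/-- Feedback policies: `u_k = μ_k(x_k)` for Borel-measurable `μ_k`. -/
def Ctx.IsFeedback (C : Ctx n m Ω) (x0 : Ω → Fin n → ℝ) (u : ℕ → Ω → Fin m → ℝ) : Prop :=
  ∃ μ : ℕ → (Fin n → ℝ) → Fin m → ℝ, (∀ k, Measurable (μ k)) ∧
    ∀ k s, u k s = μ k (C.traj x0 u k s)

/-- The closed-loop trajectory under a stationary feedback law `μ`. -/
def Ctx.fbTraj (C : Ctx n m Ω) (x0 : Ω → Fin n → ℝ) (μ : (Fin n → ℝ) → Fin m → ℝ) :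
    ℕ → Ω → Fin n → ℝ
  | 0 => x0
  | k + 1 => fun s =>
      (C.A + C.w k s • C.Abar).mulVec (C.fbTraj x0 μ k s)
      + (C.B + C.w k s • C.Bbar).mulVec (μ (C.fbTraj x0 μ k s))

/-- The stationary policy `u* given by `u*_k = μ(x*_k)` along its own closed-loop
trajectory, for a stationary feedback law `μ`. -/
def Ctx.fbPolicy (C : Ctx n m Ω) (x0 : Ω → Fin n → ℝ) (μ : (Fin n → ℝ) → Fin m → ℝ) :
    ℕ → Ω → Fin m → ℝ :=
  fun k s => μ (C.fbTraj x0 μ k s)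

/-- The linear feedback policy `u*_k = −K·x*_k` along its own trajectory. -/
def Ctx.linFbPolicy (C : Ctx n m Ω) (x0 : Ω → Fin n → ℝ) (K : Matrix (Fin m) (Fin n) ℝ) :
    ℕ → Ω → Fin m → ℝ :=
  C.fbPolicy x0 (fun x => -(K.mulVec x))

/-- `ξ_♯(x) = inf_{v ∈ ℝ^m} ‖(A + Ā·ω)x + (B + B̄·ω)v‖_ms`, realized with `ω = ω₀`. -/
def Ctx.xiSharp (C : Ctx n m Ω) (x : Ω → Fin n → ℝ) : ℝ :=
  ⨅ v : Fin m → ℝ, msNorm C.Pr (fun s =>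
    (C.A + C.w 0 s • C.Abar).mulVec (x s) + (C.B + C.w 0 s • C.Bbar).mulVec v)

/-- Extended-real logarithm: `log t` for `t > 0` and `−∞` for `t ≤ 0`. -/
def elog (t : ℝ) : EReal := if t ≤ 0 then ⊥ else ((Real.log t : ℝ) : EReal)

/-- The cost `J(x₀,u)` interpreted with values in `[−∞,∞]`. -/
def Ctx.Je (C : Ctx n m Ω) (x0 : Ω → Fin n → ℝ) (u : ℕ → Ω → Fin m → ℝ) : EReal :=
  Filter.limsup
    (fun k : ℕ => ((1 / (k : ℝ) : ℝ) : EReal) * elog (msSq C.Pr (C.traj x0 u k) / msSq C.Pr x0))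
    Filter.atTop



/-! ### Auxiliary lemmas for Statement 13 -/

lemma unit_quad_le {n : ℕ} (Q : Matrix (Fin n) (Fin n) ℝ) (x : Fin n → ℝ)
    (hx : x ⬝ᵥ x = 1) : x ⬝ᵥ Q.mulVec x ≤ ∑ i, ∑ j, |Q i j| := by
  have hxi : ∀ i, |x i| ≤ 1 := by
    intro i
    rw [abs_le_one_iff_mul_self_le_one]
    calc x i * x i ≤ ∑ j, x j * x j :=
          Finset.single_le_sum (fun j _ => mul_self_nonneg (x j)) (Finset.mem_univ i)
      _ = 1 := hx
  have hrw : x ⬝ᵥ Q.mulVec x = ∑ i, ∑ j, x i * (Q i j * x j) := by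
    simp [dotProduct, Matrix.mulVec, Finset.mul_sum]
  rw [hrw]
  refine Finset.sum_le_sum fun i _ => Finset.sum_le_sum fun j _ => ?_
  calc x i * (Q i j * x j) ≤ |x i * (Q i j * x j)| := le_abs_self _
    _ = |x i| * |Q i j| * |x j| := by rw [abs_mul, abs_mul]; ring
    _ ≤ 1 * |Q i j| * 1 := by
        apply mul_le_mul (mul_le_mul (hxi i) le_rfl (abs_nonneg _) zero_le_one) (hxi j)
          (abs_nonneg _)
        positivity
    _ = |Q i j| := by ring

lemma quad_val {n : ℕ} (c d : ℝ) (Q : Matrix (Fin n) (Fin n) ℝ) (x : Fin n → ℝ)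
    (hx : x ⬝ᵥ x = 1) :
    x ⬝ᵥ ((c • (1 : Matrix (Fin n) (Fin n) ℝ) - d • Q).mulVec x)
      = c - d * (x ⬝ᵥ Q.mulVec x) := by
  simp [Matrix.sub_mulVec, Matrix.smul_mulVec, Matrix.one_mulVec, dotProduct_sub,
    dotProduct_smul, hx, smul_eq_mul]

lemma lamMin_bounds {n : ℕ} (hn : 0 < n) (c d : ℝ) (hd : 0 ≤ d)
    (Q : Matrix (Fin n) (Fin n) ℝ) (hQ : Q.PosSemidef) (C : ℝ)
    (hC : ∀ x : Fin n → ℝ, x ⬝ᵥ x = 1 → x ⬝ᵥ Q.mulVec x ≤ C) :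
    c - d * C ≤ lamMin (c • (1 : Matrix (Fin n) (Fin n) ℝ) - d • Q) ∧
      lamMin (c • (1 : Matrix (Fin n) (Fin n) ℝ) - d • Q) ≤ c := by
  have hne : Nonempty {x : Fin n → ℝ // x ⬝ᵥ x = 1} :=
    ⟨⟨Pi.single ⟨0, hn⟩ 1, by simp [single_dotProduct]⟩⟩
  have hval : ∀ x : {x : Fin n → ℝ // x ⬝ᵥ x = 1},
      x.1 ⬝ᵥ ((c • (1 : Matrix (Fin n) (Fin n) ℝ) - d • Q).mulVec x.1)
        = c - d * (x.1 ⬝ᵥ Q.mulVec x.1) := fun x => quad_val c d Q x.1 x.2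
  have hbdd : BddBelow (Set.range fun x : {x : Fin n → ℝ // x ⬝ᵥ x = 1} =>
      x.1 ⬝ᵥ ((c • (1 : Matrix (Fin n) (Fin n) ℝ) - d • Q).mulVec x.1)) := by
    refine ⟨c - d * C, ?_⟩
    rintro v ⟨x, rfl⟩
    simp only [hval]
    have h1 := hC x.1 x.2
    nlinarith
  constructor
  · rw [lamMin]
    refine le_ciInf fun x => ?_
    simp only [hval]
    have h1 := hC x.1 x.2
    nlinarith
  · rw [lamMin]
    obtain ⟨x0⟩ := hne
    refine le_trans (ciInf_le hbdd x0) ?_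
    simp only [hval]
    have h0 : 0 ≤ x0.1 ⬝ᵥ Q.mulVec x0.1 := by simpa using hQ.dotProduct_mulVec_nonneg x0.1
    nlinarith

lemma invSqrt_phi_invSqrt {n m : ℕ} (σ : ℝ) (A Abar : Matrix (Fin n) (Fin n) ℝ)
    (B Bbar : Matrix (Fin n) (Fin m) ℝ) {t : ℝ} (ht1 : t < 1)
    {P : Matrix (Fin n) (Fin n) ℝ} (hP : P.PosDef) (hPtr : P.trace = 1)
    (hfix : PhiHat σ A Abar B Bbar t P = P)
    {g : ℝ} (hg : g = Matrix.trace ((1 - t) • Phi σ A Abar B Bbar P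
      + (t / (n : ℝ)) • (1 : Matrix (Fin n) (Fin n) ℝ))) :
    invSqrt P * Phi σ A Abar B Bbar P * invSqrt P
      = (g / (1 - t)) • (1 : Matrix (Fin n) (Fin n) ℝ) - (t / (n : ℝ) / (1 - t)) • P⁻¹ := by
  have h1t : (1 : ℝ) - t ≠ 0 := by linarith
  simp only [PhiHat] at hfix
  rw [← hg] at hfix
  have hg0 : g ≠ 0 := by
    intro h0
    rw [h0, _root_.inv_zero, zero_smul] at hfix
    apply one_ne_zero (α := ℝ)
    rw [← hPtr, ← hfix, Matrix.trace_zero]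
  have hMg : (1 - t) • Phi σ A Abar B Bbar P + (t / (n : ℝ)) • (1 : Matrix (Fin n) (Fin n) ℝ)
      = g • P := by
    have h := congrArg (fun X : Matrix (Fin n) (Fin n) ℝ => g • X) hfix
    simp only [smul_smul, mul_inv_cancel₀ hg0, one_smul] at h
    exact h
  have hΦval : Phi σ A Abar B Bbar P
      = (1 - t)⁻¹ • (g • P - (t / (n : ℝ)) • (1 : Matrix (Fin n) (Fin n) ℝ)) := by
    have h2 : (1 - t) • Phi σ A Abar B Bbar P
        = g • P - (t / (n : ℝ)) • (1 : Matrix (Fin n) (Fin n) ℝ) := by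
      rw [← hMg]; abel
    rw [← h2, smul_smul, inv_mul_cancel₀ h1t, one_smul]
  have hPsd := hP.posSemidef
  have hiS : invSqrt P = (hPsd.1.eigenvectorUnitary.1 * diagonal (((↑) : ℝ → ℝ) ∘ Real.sqrt ∘ hPsd.1.eigenvalues) *
      (star hPsd.1.eigenvectorUnitary : Matrix (Fin n) (Fin n) ℝ))⁻¹ := dif_pos hPsd
  set S := (hPsd.1.eigenvectorUnitary.1 * diagonal (((↑) : ℝ → ℝ) ∘ Real.sqrt ∘ hPsd.1.eigenvalues) *
      (star hPsd.1.eigenvectorUnitary : Matrix (Fin n) (Fin n) ℝ)) with hSdef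
  have hSS : S * S = P := by
    have hU : (star hPsd.1.eigenvectorUnitary : Matrix (Fin n) (Fin n) ℝ) *
        hPsd.1.eigenvectorUnitary.1 = 1 := Unitary.coe_star_mul_self _
    have hD : diagonal (((↑) : ℝ → ℝ) ∘ Real.sqrt ∘ hPsd.1.eigenvalues) *
        diagonal (((↑) : ℝ → ℝ) ∘ Real.sqrt ∘ hPsd.1.eigenvalues)
        = diagonal (RCLike.ofReal ∘ hPsd.1.eigenvalues) := by
      rw [diagonal_mul_diagonal]; congr 1; funext i
      simp [Real.mul_self_sqrt (hPsd.eigenvalues_nonneg i)]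
    conv_rhs => rw [hPsd.1.spectral_theorem, Unitary.conjStarAlgAut_apply]
    rw [hSdef]
    simp only [Matrix.mul_assoc]
    rw [← Matrix.mul_assoc (star _) _ (diagonal _ * _), hU, Matrix.one_mul,
      ← Matrix.mul_assoc (diagonal _) (diagonal _), hD]
  have hdetS : IsUnit S.det := by
    have hdd : S.det * S.det = P.det := by rw [← Matrix.det_mul, hSS]
    have hp := hP.det_pos
    refine isUnit_iff_ne_zero.mpr fun h => ?_
    rw [h, zero_mul] at hdd
    exact hp.ne' hdd.symm
  have h1 : S⁻¹ * P * S⁻¹ = 1 := by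
    rw [← hSS, ← mul_assoc, Matrix.nonsing_inv_mul S hdetS, one_mul,
      Matrix.mul_nonsing_inv S hdetS]
  have h2 : S⁻¹ * (1 : Matrix (Fin n) (Fin n) ℝ) * S⁻¹ = P⁻¹ := by
    rw [mul_one, ← Matrix.mul_inv_rev, hSS]
  rw [hiS, hΦval]
  have expand : S⁻¹ * ((1 - t)⁻¹ • (g • P - (t / (n : ℝ)) • (1 : Matrix (Fin n) (Fin n) ℝ)))
        * S⁻¹
      = (1 - t)⁻¹ • (g • (S⁻¹ * P * S⁻¹)
          - (t / (n : ℝ)) • (S⁻¹ * (1 : Matrix (Fin n) (Fin n) ℝ) * S⁻¹)) := by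
    simp only [Matrix.mul_smul, Matrix.smul_mul, Matrix.mul_sub, Matrix.sub_mul]
  rw [expand, h1, h2, smul_sub, smul_smul, smul_smul]
  congr 1
  · congr 1
    ring
  · congr 1
    ring

/-- Asymptotic tightness: if the regularized fixed points
converge to a positive definite limit as `τ_k → 0`, then the certified squared
gap `γ^(τ_k)/(1−τ_k) − L(P^(τ_k))` tends to `0`. -/
theorem gap_tends_to_zero {n m : ℕ} (hn : 0 < n) (hm : 0 < m)
    (σ : ℝ) (hσ : 0 < σ)
    (A Abar : Matrix (Fin n) (Fin n) ℝ) (B Bbar : Matrix (Fin n) (Fin m) ℝ)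
    (hR0 : (Bᵀ * B + σ ^ 2 • (Bbarᵀ * Bbar)).PosDef)
    (τ : ℕ → ℝ) (hτmem : ∀ k, τ k ∈ Set.Ioo (0 : ℝ) 1)
    (hτ0 : Filter.Tendsto τ Filter.atTop (nhds 0))
    (P : ℕ → Matrix (Fin n) (Fin n) ℝ)
    (hPpd : ∀ k, (P k).PosDef) (hPtr : ∀ k, (P k).trace = 1)
    (hfix : ∀ k, PhiHat σ A Abar B Bbar (τ k) (P k) = P k)
    (γ : ℕ → ℝ)
    (hγ : ∀ k, γ k = Matrix.trace ((1 - τ k) • Phi σ A Abar B Bbar (P k)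
      + (τ k / (n : ℝ)) • (1 : Matrix (Fin n) (Fin n) ℝ)))
    (Pstar : Matrix (Fin n) (Fin n) ℝ) (hPstar : Pstar.PosDef)
    (hconv : Filter.Tendsto P Filter.atTop (nhds Pstar)) :
    Filter.Tendsto (fun k => γ k / (1 - τ k) - Lval σ A Abar B Bbar (P k))
      Filter.atTop (nhds 0) := by
  classical
  set d : ℕ → ℝ := fun k => τ k / (n : ℝ) / (1 - τ k) with hd_def
  have hd0 : ∀ k, 0 ≤ d k := fun k => by
    have h1 := (hτmem k).1
    have h2 := (hτmem k).2
    have h3 : (0 : ℝ) < 1 - τ k := by linarith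
    exact div_nonneg (div_nonneg h1.le (Nat.cast_nonneg n)) h3.le
  have hQconv : Filter.Tendsto (fun k => (P k)⁻¹) Filter.atTop (nhds Pstar⁻¹) := by
    have hdet : Filter.Tendsto (fun k => (P k).det) Filter.atTop (nhds Pstar.det) :=
      ((continuous_id.matrix_det).tendsto Pstar).comp hconv
    have hadj : Filter.Tendsto (fun k => (P k).adjugate) Filter.atTop (nhds Pstar.adjugate) :=
      ((continuous_id.matrix_adjugate).tendsto Pstar).comp hconv
    have hdet' := (hdet.inv₀ hPstar.det_pos.ne')
    have hsm := hdet'.smul hadj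
    simpa [Matrix.inv_def, Ring.inverse_eq_inv] using hsm
  set F : Matrix (Fin n) (Fin n) ℝ → ℝ := fun Q => ∑ i, ∑ j, |Q i j| with hF_def
  have hFc : Continuous F := by
    refine continuous_finset_sum _ fun i _ => continuous_finset_sum _ fun j _ => ?_
    exact ((continuous_apply j).comp (continuous_apply i)).abs
  have hFt : Filter.Tendsto (fun k => F ((P k)⁻¹)) Filter.atTop (nhds (F Pstar⁻¹)) :=
    (hFc.tendsto _).comp hQconv
  set C : ℝ := F Pstar⁻¹ + 1 with hC_def
  have hCev : ∀ᶠ k in Filter.atTop, F ((P k)⁻¹) ≤ C :=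
    (hFt.eventually_lt_const (lt_add_one _)).mono fun k h => h.le
  have hL : ∀ k, Lval σ A Abar B Bbar (P k)
      = lamMin ((γ k / (1 - τ k)) • (1 : Matrix (Fin n) (Fin n) ℝ) - d k • (P k)⁻¹) := by
    intro k
    simp only [Lval]
    rw [invSqrt_phi_invSqrt σ A Abar B Bbar (hτmem k).2 (hPpd k) (hPtr k) (hfix k) (hγ k)]
  have hbounds : ∀ k (C' : ℝ), F ((P k)⁻¹) ≤ C' →
      γ k / (1 - τ k) - d k * C' ≤ lamMin ((γ k / (1 - τ k)) •
          (1 : Matrix (Fin n) (Fin n) ℝ) - d k • (P k)⁻¹) ∧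
        lamMin ((γ k / (1 - τ k)) • (1 : Matrix (Fin n) (Fin n) ℝ) - d k • (P k)⁻¹)
          ≤ γ k / (1 - τ k) := by
    intro k C' hC'
    exact lamMin_bounds hn (γ k / (1 - τ k)) (d k) (hd0 k) ((P k)⁻¹)
      ((hPpd k).inv.posSemidef) C'
      (fun x hx => le_trans (unit_quad_le _ x hx) hC')
  have hlow : ∀ k, (0 : ℝ) ≤ γ k / (1 - τ k) - Lval σ A Abar B Bbar (P k) := by
    intro k
    have h := (hbounds k (F ((P k)⁻¹)) le_rfl).2
    rw [hL k]
    linarith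
  have hup : ∀ᶠ k in Filter.atTop,
      γ k / (1 - τ k) - Lval σ A Abar B Bbar (P k) ≤ d k * C := by
    refine hCev.mono fun k hk => ?_
    have h := (hbounds k C hk).1
    rw [hL k]
    linarith
  have hdt : Filter.Tendsto d Filter.atTop (nhds 0) := by
    have h1 : Filter.Tendsto (fun k => 1 - τ k) Filter.atTop (nhds 1) := by
      have := tendsto_const_nhds (x := (1 : ℝ)) (f := Filter.atTop (α := ℕ)) |>.sub hτ0
      simpa using this
    have := (hτ0.div_const (n : ℝ)).div h1 one_ne_zero
    simp at this; exact this
  have hupt : Filter.Tendsto (fun k => d k * C) Filter.atTop (nhds 0) := by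
    simpa using hdt.mul_const C
  exact tendsto_of_tendsto_of_tendsto_of_le_of_le' tendsto_const_nhds hupt
    (Filter.Eventually.of_forall hlow) hup

end SCS
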